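/- arXiv:1907.02401 — 3 statements merged into one kernel-verified Lean document; each statement's English description precedes it below -/
import Mathlib

section
/- Let h : ℝⁿ → ℝᵐ and g : ℝⁿ → ℝᵖ be continuously differentiable, let [ℓ,u] ⊆ ℝⁿ be a compact box, let λ_min < λ_max and μ_max > 0, and let c_lips > 0 be such that ‖∇h(x)‖·‖λ‖ + ‖∇g(x)‖·‖μ‖ ≤ c_lips for all x ∈ [ℓ,u], λ ∈ [λ_min,λ_max]ᵐ, μ ∈ [0,μ_max]ᵖ. Then for all x ∈ [ℓ,u], λ ∈ [λ_min,λ_max]ᵐ, μ ∈ [0,μ_max]ᵖ, and ρ > 0, one has ‖P_{[ℓ,u]}(x − ∇[‖h(x)‖² + ‖g(x)_+‖²]) − x‖ ≤ ‖P_{[ℓ,u]}(x − ∇[‖h(x) + λ/ρ‖² + ‖(g(x) + μ/ρ)_+‖²]) − x‖ + 2 c_lips/ρ, where the gradients are taken with respect to x. -/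
/-- Componentwise Euclidean projection onto the box `[ℓ,u] ⊆ ℝⁿ`. -/
noncomputable def boxProj {n : ℕ} (l u x : EuclideanSpace ℝ (Fin n)) :
    EuclideanSpace ℝ (Fin n) :=
  (WithLp.equiv 2 (Fin n → ℝ)).symm fun i => max (l i) (min (x i) (u i))

/-- The transposed Jacobian `∇h(x)`: the `n × m` matrix whose columns are the gradients
`∇hᵢ(x)`, viewed as a continuous linear map `ℝᵐ → ℝⁿ` (operator norm `‖·‖`). -/
noncomputable def jacobianT {n m : ℕ}
    (h : EuclideanSpace ℝ (Fin n) → EuclideanSpace ℝ (Fin m))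
    (x : EuclideanSpace ℝ (Fin n)) :
    EuclideanSpace ℝ (Fin m) →L[ℝ] EuclideanSpace ℝ (Fin n) :=
  LinearMap.toContinuousLinearMap
    (Matrix.toEuclideanLin
      (Matrix.of fun (i : Fin n) (j : Fin m) => gradient (fun y => h y j) x i))

/-- The squared infeasibility measure `‖h(x)‖² + ‖g(x)₊‖²`. -/
noncomputable def infeas {n m p : ℕ}
    (h : EuclideanSpace ℝ (Fin n) → EuclideanSpace ℝ (Fin m))
    (g : EuclideanSpace ℝ (Fin n) → EuclideanSpace ℝ (Fin p))
    (x : EuclideanSpace ℝ (Fin n)) : ℝ :=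
  (∑ i, h x i ^ 2) + ∑ j, max (g x j) 0 ^ 2

/-- The shifted squared infeasibility measure `‖h(x) + λ/ρ‖² + ‖(g(x) + μ/ρ)₊‖²`. -/
noncomputable def shiftedInfeas {n m p : ℕ}
    (h : EuclideanSpace ℝ (Fin n) → EuclideanSpace ℝ (Fin m))
    (g : EuclideanSpace ℝ (Fin n) → EuclideanSpace ℝ (Fin p))
    (lam : EuclideanSpace ℝ (Fin m)) (mu : EuclideanSpace ℝ (Fin p)) (ρ : ℝ)
    (x : EuclideanSpace ℝ (Fin n)) : ℝ :=
  (∑ i, (h x i + lam i / ρ) ^ 2) + ∑ j, max (g x j + mu j / ρ) 0 ^ 2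

/- ### Auxiliary lemmas -/

/-- Coordinatewise domination implies norm domination in Euclidean space. -/
lemma euclid_norm_le_of_abs_le {k : ℕ} {a b : EuclideanSpace ℝ (Fin k)}
    (H : ∀ i, |a i| ≤ |b i|) : ‖a‖ ≤ ‖b‖ := by
  rw [EuclideanSpace.norm_eq, EuclideanSpace.norm_eq]
  apply Real.sqrt_le_sqrt
  apply Finset.sum_le_sum
  intro i _
  have := H i
  simp only [Real.norm_eq_abs]
  exact pow_le_pow_left₀ (abs_nonneg _) this 2

/-- The box projection is 1-Lipschitz. -/
lemma boxProj_lipschitz {k : ℕ} (l u a b : EuclideanSpace ℝ (Fin k)) :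
    ‖boxProj l u a - boxProj l u b‖ ≤ ‖a - b‖ := by
  apply euclid_norm_le_of_abs_le
  intro i
  have h1 : (boxProj l u a - boxProj l u b) i
      = max (l i) (min (a i) (u i)) - max (l i) (min (b i) (u i)) := rfl
  have h2 : (a - b) i = a i - b i := rfl
  rw [h1, h2]
  calc |max (l i) (min (a i) (u i)) - max (l i) (min (b i) (u i))|
      = |max (min (a i) (u i)) (l i) - max (min (b i) (u i)) (l i)| := by
        rw [max_comm (l i), max_comm (l i)]
    _ ≤ |min (a i) (u i) - min (b i) (u i)| := abs_max_sub_max_le_abs _ _ _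
    _ ≤ max |a i - b i| |u i - u i| := abs_min_sub_min_le_max _ _ _ _
    _ = |a i - b i| := by simp

/-- Derivative of the squared positive part. -/
lemma hasDerivAt_posPartSq (t : ℝ) :
    HasDerivAt (fun s : ℝ => max s 0 ^ 2) (2 * max t 0) t := by
  rcases lt_trichotomy t 0 with ht | ht | ht
  · have h0 : HasDerivAt (fun _ : ℝ => (0 : ℝ)) 0 t := hasDerivAt_const t 0
    have heq : (fun s : ℝ => max s 0 ^ 2) =ᶠ[nhds t] fun _ => (0 : ℝ) := by
      filter_upwards [Iio_mem_nhds ht] with s hs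
      simp [max_eq_right (le_of_lt (Set.mem_Iio.mp hs))]
    have := h0.congr_of_eventuallyEq heq
    simpa [max_eq_right (le_of_lt ht)] using this
  · subst ht
    rw [hasDerivAt_iff_isLittleO]
    simp only [sub_zero, max_self, ne_eq, OfNat.ofNat_ne_zero, not_false_eq_true,
      zero_pow, smul_zero, mul_zero]
    rw [Asymptotics.isLittleO_iff]
    intro c hc
    filter_upwards [eventually_abs_sub_lt 0 hc] with s hs
    have h1 : max s 0 ≤ |s| := max_le (le_abs_self s) (abs_nonneg s)
    have h2 : max s 0 ^ 2 ≤ |s| ^ 2 := pow_le_pow_left₀ (le_max_right _ _) h1 2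
    have h3 : |s| < c := by simpa using hs
    calc ‖max s 0 ^ 2‖ = max s 0 ^ 2 := by
          simp [abs_of_nonneg (pow_nonneg (le_max_right s 0) 2)]
      _ ≤ |s| ^ 2 := h2
      _ = |s| * |s| := by ring
      _ ≤ c * |s| := mul_le_mul_of_nonneg_right (le_of_lt h3) (abs_nonneg s)
      _ = c * ‖s‖ := by simp
  · have h0 : HasDerivAt (fun s : ℝ => s ^ 2) (2 * t) t := by
      simpa using hasDerivAt_pow 2 t
    have heq : (fun s : ℝ => max s 0 ^ 2) =ᶠ[nhds t] fun s => s ^ 2 := by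
      filter_upwards [Ioi_mem_nhds ht] with s hs
      simp [max_eq_left (le_of_lt (Set.mem_Ioi.mp hs))]
    have := h0.congr_of_eventuallyEq heq
    simpa [max_eq_left (le_of_lt ht)] using this

/-- Derivative of the shifted squared positive part. -/
lemma hasDerivAt_posPartSq_shift (a t : ℝ) :
    HasDerivAt (fun s : ℝ => max (s + a) 0 ^ 2) (2 * max (t + a) 0) t := by
  have h1 : HasDerivAt (fun s : ℝ => s + a) 1 t := (hasDerivAt_id t).add_const a
  have := (hasDerivAt_posPartSq (t + a)).comp t h1
  simpa [Function.comp_def] using this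

lemma hasDerivAt_sq_shift (a t : ℝ) :
    HasDerivAt (fun s : ℝ => (s + a) ^ 2) (2 * (t + a)) t := by
  have h1 : HasDerivAt (fun s : ℝ => s + a) 1 t := (hasDerivAt_id t).add_const a
  have h0 : HasDerivAt (fun s : ℝ => s ^ 2) (2 * (t + a)) (t + a) := by
    simpa using hasDerivAt_pow 2 (t + a)
  simpa [Function.comp_def] using h0.comp t h1

/-- Inner product with the gradient gives the Fréchet derivative (unconditionally,
by definition of `gradient`). -/
lemma inner_gradient_eq_fderiv {k : ℕ} (f : EuclideanSpace ℝ (Fin k) → ℝ)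
    (x v : EuclideanSpace ℝ (Fin k)) :
    (inner ℝ (gradient f x) v : ℝ) = fderiv ℝ f x v := by
  rw [gradient, ← InnerProductSpace.toDual_apply_apply, LinearIsometryEquiv.apply_symm_apply]

/-- Gradient of `y ↦ ∑ j, φ j (h y j)` in terms of the transposed Jacobian. -/
lemma hasGradientAt_sum_comp {n m : ℕ} {h : EuclideanSpace ℝ (Fin n) → EuclideanSpace ℝ (Fin m)}
    (hh : ContDiff ℝ 1 h) (x : EuclideanSpace ℝ (Fin n))
    (φ : Fin m → ℝ → ℝ) (c : Fin m → ℝ)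
    (hφ : ∀ j, HasDerivAt (φ j) (c j) (h x j)) :
    HasGradientAt (fun y => ∑ j, φ j (h y j))
      (jacobianT h x ((WithLp.equiv 2 (Fin m → ℝ)).symm c)) x := by
  have hdiff : ∀ j : Fin m, DifferentiableAt ℝ (fun y => h y j) x := fun j =>
    ((EuclideanSpace.proj j : EuclideanSpace ℝ (Fin m) →L[ℝ] ℝ).differentiableAt).comp x
      (hh.differentiable one_ne_zero x)
  set L : Fin m → (EuclideanSpace ℝ (Fin n) →L[ℝ] ℝ) :=
    fun j => fderiv ℝ (fun y => h y j) x with hL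
  have hF : HasFDerivAt (fun y => ∑ j, φ j (h y j)) (∑ j, c j • L j) x := by
    apply HasFDerivAt.fun_sum
    intro j _
    exact (hφ j).comp_hasFDerivAt x (hdiff j).hasFDerivAt
  rw [hasGradientAt_iff_hasFDerivAt]
  have hEq : (InnerProductSpace.toDual ℝ (EuclideanSpace ℝ (Fin n)))
      (jacobianT h x ((WithLp.equiv 2 (Fin m → ℝ)).symm c)) = ∑ j, c j • L j := by
    apply ContinuousLinearMap.ext
    intro v
    rw [InnerProductSpace.toDual_apply_apply]
    have happ : jacobianT h x ((WithLp.equiv 2 (Fin m → ℝ)).symm c)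
        = (WithLp.equiv 2 (Fin n → ℝ)).symm
            (Matrix.mulVec (Matrix.of fun (i : Fin n) (j : Fin m) =>
              gradient (fun y => h y j) x i) c) := by
      simp [jacobianT, Matrix.toEuclideanLin_apply_piLp_toLp]
    rw [happ]
    have hlhs : (inner ℝ ((WithLp.equiv 2 (Fin n → ℝ)).symm
        (Matrix.mulVec (Matrix.of fun (i : Fin n) (j : Fin m) =>
          gradient (fun y => h y j) x i) c)) v : ℝ)
        = ∑ i, (∑ j, gradient (fun y => h y j) x i * c j) * v i := by
      rw [PiLp.inner_apply]
      apply Finset.sum_congr rfl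
      intro i _
      simp [Matrix.mulVec, dotProduct]
      ring
    rw [hlhs]
    have hswap : ∑ i, (∑ j, gradient (fun y => h y j) x i * c j) * v i
        = ∑ j, c j * ∑ i, gradient (fun y => h y j) x i * v i := by
      simp only [Finset.sum_mul]
      rw [Finset.sum_comm]
      apply Finset.sum_congr rfl
      intro j _
      rw [Finset.mul_sum]
      apply Finset.sum_congr rfl
      intro i _
      ring
    rw [hswap]
    have hterm : ∀ j : Fin m, (∑ i, gradient (fun y => h y j) x i * v i) = L j v := by
      intro j
      have := inner_gradient_eq_fderiv (fun y => h y j) x v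
      rw [← this, PiLp.inner_apply]
      simp
      exact Finset.sum_congr rfl fun i _ => mul_comm _ _
    simp only [hterm]
    simp [ContinuousLinearMap.sum_apply]
  have hF2 := hF
  rw [← hEq] at hF2
  exact hF2

lemma HasGradientAt.add'' {k : ℕ} {f g : EuclideanSpace ℝ (Fin k) → ℝ}
    {f' g' x : EuclideanSpace ℝ (Fin k)}
    (hf : HasGradientAt f f' x) (hg : HasGradientAt g g' x) :
    HasGradientAt (fun y => f y + g y) (f' + g') x := by
  rw [hasGradientAt_iff_hasFDerivAt] at hf hg ⊢
  rw [map_add]; exact hf.add hg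

/-- Lemma 3.6 (Lemma `lemcomplexity4`): the projected gradient of the infeasibility measure
is bounded by the projected gradient of the shifted infeasibility measure plus `2 c_lips / ρ`. -/
theorem projected_gradient_infeasibility_bound
    {n m p : ℕ}
    (h : EuclideanSpace ℝ (Fin n) → EuclideanSpace ℝ (Fin m))
    (g : EuclideanSpace ℝ (Fin n) → EuclideanSpace ℝ (Fin p))
    (hh : ContDiff ℝ 1 h) (hg : ContDiff ℝ 1 g)
    (l u : EuclideanSpace ℝ (Fin n)) (hlu : ∀ i, l i ≤ u i)
    (lamMin lamMax μmax : ℝ) (hlam : lamMin < lamMax) (hμ : 0 < μmax)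
    (clips : ℝ) (hclips : 0 < clips)
    (hclipsBound :
      ∀ x : EuclideanSpace ℝ (Fin n), (∀ i, x i ∈ Set.Icc (l i) (u i)) →
        ∀ lam : EuclideanSpace ℝ (Fin m), (∀ i, lam i ∈ Set.Icc lamMin lamMax) →
          ∀ mu : EuclideanSpace ℝ (Fin p), (∀ j, mu j ∈ Set.Icc (0 : ℝ) μmax) →
            ‖jacobianT h x‖ * ‖lam‖ + ‖jacobianT g x‖ * ‖mu‖ ≤ clips) :
    ∀ x : EuclideanSpace ℝ (Fin n), (∀ i, x i ∈ Set.Icc (l i) (u i)) →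
      ∀ lam : EuclideanSpace ℝ (Fin m), (∀ i, lam i ∈ Set.Icc lamMin lamMax) →
        ∀ mu : EuclideanSpace ℝ (Fin p), (∀ j, mu j ∈ Set.Icc (0 : ℝ) μmax) →
          ∀ ρ : ℝ, 0 < ρ →
            ‖boxProj l u (x - gradient (infeas h g) x) - x‖ ≤
              ‖boxProj l u (x - gradient (shiftedInfeas h g lam mu ρ) x) - x‖ +
                2 * clips / ρ := by
  intro x hx lam hlamm mu hmu ρ hρ
  -- coefficient vectors
  set c1 : Fin m → ℝ := fun j => 2 * h x j with hc1
  set c2 : Fin p → ℝ := fun j => 2 * max (g x j) 0 with hc2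
  set c1' : Fin m → ℝ := fun j => 2 * (h x j + lam j / ρ) with hc1'
  set c2' : Fin p → ℝ := fun j => 2 * max (g x j + mu j / ρ) 0 with hc2'
  -- gradient of infeas
  have H1 : HasGradientAt (fun y => ∑ i, h y i ^ 2)
      (jacobianT h x ((WithLp.equiv 2 (Fin m → ℝ)).symm c1)) x := by
    apply hasGradientAt_sum_comp hh x (fun _ s => s ^ 2) c1
    intro j
    simpa [hc1] using hasDerivAt_pow 2 (h x j)
  have H2 : HasGradientAt (fun y => ∑ j, max (g y j) 0 ^ 2)
      (jacobianT g x ((WithLp.equiv 2 (Fin p → ℝ)).symm c2)) x := by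
    apply hasGradientAt_sum_comp hg x (fun _ s => max s 0 ^ 2) c2
    intro j
    exact hasDerivAt_posPartSq (g x j)
  have H1' : HasGradientAt (fun y => ∑ i, (h y i + lam i / ρ) ^ 2)
      (jacobianT h x ((WithLp.equiv 2 (Fin m → ℝ)).symm c1')) x := by
    apply hasGradientAt_sum_comp hh x (fun j s => (s + lam j / ρ) ^ 2) c1'
    intro j
    exact hasDerivAt_sq_shift (lam j / ρ) (h x j)
  have H2' : HasGradientAt (fun y => ∑ j, max (g y j + mu j / ρ) 0 ^ 2)
      (jacobianT g x ((WithLp.equiv 2 (Fin p → ℝ)).symm c2')) x := by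
    apply hasGradientAt_sum_comp hg x (fun j s => max (s + mu j / ρ) 0 ^ 2) c2'
    intro j
    exact hasDerivAt_posPartSq_shift (mu j / ρ) (g x j)
  have Hinf : HasGradientAt (infeas h g)
      (jacobianT h x ((WithLp.equiv 2 (Fin m → ℝ)).symm c1)
        + jacobianT g x ((WithLp.equiv 2 (Fin p → ℝ)).symm c2)) x := by
    have := H1.add'' H2
    exact this
  have Hsh : HasGradientAt (shiftedInfeas h g lam mu ρ)
      (jacobianT h x ((WithLp.equiv 2 (Fin m → ℝ)).symm c1')
        + jacobianT g x ((WithLp.equiv 2 (Fin p → ℝ)).symm c2')) x := by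
    have := H1'.add'' H2'
    exact this
  have hg1 : gradient (infeas h g) x
      = jacobianT h x ((WithLp.equiv 2 (Fin m → ℝ)).symm c1)
        + jacobianT g x ((WithLp.equiv 2 (Fin p → ℝ)).symm c2) := Hinf.gradient
  have hg2 : gradient (shiftedInfeas h g lam mu ρ) x
      = jacobianT h x ((WithLp.equiv 2 (Fin m → ℝ)).symm c1')
        + jacobianT g x ((WithLp.equiv 2 (Fin p → ℝ)).symm c2') := Hsh.gradient
  -- bound the difference of gradients
  have hdiffEq : gradient (infeas h g) x - gradient (shiftedInfeas h g lam mu ρ) x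
      = jacobianT h x ((WithLp.equiv 2 (Fin m → ℝ)).symm (c1 - c1'))
        + jacobianT g x ((WithLp.equiv 2 (Fin p → ℝ)).symm (c2 - c2')) := by
    rw [hg1, hg2]
    have e1 : (WithLp.equiv 2 (Fin m → ℝ)).symm (c1 - c1')
        = (WithLp.equiv 2 (Fin m → ℝ)).symm c1 - (WithLp.equiv 2 (Fin m → ℝ)).symm c1' := rfl
    have e2 : (WithLp.equiv 2 (Fin p → ℝ)).symm (c2 - c2')
        = (WithLp.equiv 2 (Fin p → ℝ)).symm c2 - (WithLp.equiv 2 (Fin p → ℝ)).symm c2' := rfl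
    rw [e1, e2, map_sub, map_sub]
    abel
  have hn1 : ‖(WithLp.equiv 2 (Fin m → ℝ)).symm (c1 - c1')‖ = (2 / ρ) * ‖lam‖ := by
    have hv : (WithLp.equiv 2 (Fin m → ℝ)).symm (c1 - c1') = (-(2 / ρ)) • lam := by
      ext j
      show c1 j - c1' j = -(2 / ρ) * lam j
      rw [hc1, hc1']
      field_simp
      ring
    rw [hv, norm_smul]
    rw [Real.norm_eq_abs, abs_neg, abs_of_pos (by positivity : (0:ℝ) < 2 / ρ)]
  have hn2 : ‖(WithLp.equiv 2 (Fin p → ℝ)).symm (c2 - c2')‖ ≤ (2 / ρ) * ‖mu‖ := by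
    have hb : ‖((2 / ρ) • mu : EuclideanSpace ℝ (Fin p))‖ = (2 / ρ) * ‖mu‖ := by
      rw [norm_smul, Real.norm_eq_abs, abs_of_pos (by positivity : (0:ℝ) < 2 / ρ)]
    rw [← hb]
    apply euclid_norm_le_of_abs_le
    intro j
    have hsm : ((2 / ρ) • mu : EuclideanSpace ℝ (Fin p)) j = (2 / ρ) * mu j := rfl
    have hcc : ((WithLp.equiv 2 (Fin p → ℝ)).symm (c2 - c2')) j = c2 j - c2' j := rfl
    rw [hsm, hcc, hc2, hc2']
    have key : |max (g x j) 0 - max (g x j + mu j / ρ) 0| ≤ |mu j / ρ| := by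
      have := abs_max_sub_max_le_abs (g x j) (g x j + mu j / ρ) 0
      simpa using this
    calc |2 * max (g x j) 0 - 2 * max (g x j + mu j / ρ) 0|
        = 2 * |max (g x j) 0 - max (g x j + mu j / ρ) 0| := by
          rw [← mul_sub, abs_mul, abs_two]
      _ ≤ 2 * |mu j / ρ| := by linarith [key]
      _ = |2 / ρ * mu j| := by
          rw [abs_mul, abs_div, abs_div, abs_two, abs_of_pos hρ]
          ring
  -- norm of gradient difference
  have hgradbound : ‖gradient (infeas h g) x - gradient (shiftedInfeas h g lam mu ρ) x‖
      ≤ 2 * clips / ρ := by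
    rw [hdiffEq]
    have hJh := (jacobianT h x).le_opNorm ((WithLp.equiv 2 (Fin m → ℝ)).symm (c1 - c1'))
    have hJg := (jacobianT g x).le_opNorm ((WithLp.equiv 2 (Fin p → ℝ)).symm (c2 - c2'))
    have hJhn : (0:ℝ) ≤ ‖jacobianT h x‖ := norm_nonneg _
    have hJgn : (0:ℝ) ≤ ‖jacobianT g x‖ := norm_nonneg _
    have hcb := hclipsBound x hx lam hlamm mu hmu
    have hstep : ‖jacobianT h x ((WithLp.equiv 2 (Fin m → ℝ)).symm (c1 - c1'))
        + jacobianT g x ((WithLp.equiv 2 (Fin p → ℝ)).symm (c2 - c2'))‖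
        ≤ ‖jacobianT h x‖ * ((2 / ρ) * ‖lam‖) + ‖jacobianT g x‖ * ((2 / ρ) * ‖mu‖) := by
      refine (norm_add_le _ _).trans ?_
      gcongr
      · exact hJh.trans (by rw [hn1])
      · exact hJg.trans (by nlinarith [norm_nonneg ((WithLp.equiv 2 (Fin p → ℝ)).symm (c2 - c2'))])
    refine hstep.trans ?_
    have : ‖jacobianT h x‖ * (2 / ρ * ‖lam‖) + ‖jacobianT g x‖ * (2 / ρ * ‖mu‖)
        = (2 / ρ) * (‖jacobianT h x‖ * ‖lam‖ + ‖jacobianT g x‖ * ‖mu‖) := by ring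
    rw [this]
    have h2ρ : (0:ℝ) < 2 / ρ := by positivity
    calc (2 / ρ) * (‖jacobianT h x‖ * ‖lam‖ + ‖jacobianT g x‖ * ‖mu‖)
        ≤ (2 / ρ) * clips := by
          apply mul_le_mul_of_nonneg_left hcb (le_of_lt h2ρ)
      _ = 2 * clips / ρ := by ring
  -- final assembly via 1-Lipschitzness of the projection
  set a := x - gradient (infeas h g) x with ha
  set b := x - gradient (shiftedInfeas h g lam mu ρ) x with hb
  have hsplit : boxProj l u a - x = (boxProj l u b - x) + (boxProj l u a - boxProj l u b) := by
    abel
  calc ‖boxProj l u a - x‖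
      = ‖(boxProj l u b - x) + (boxProj l u a - boxProj l u b)‖ := by rw [← hsplit]
    _ ≤ ‖boxProj l u b - x‖ + ‖boxProj l u a - boxProj l u b‖ := norm_add_le _ _
    _ ≤ ‖boxProj l u b - x‖ + ‖a - b‖ := by
        linarith [boxProj_lipschitz l u a b]
    _ ≤ ‖boxProj l u b - x‖ + 2 * clips / ρ := by
        have hab : a - b = gradient (shiftedInfeas h g lam mu ρ) x - gradient (infeas h g) x := by
          rw [ha, hb]; abel
        rw [hab]
        have hgb := hgradbound
        rw [norm_sub_rev] at hgb
        linarith [hgb]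
end

section
/- Let h : ℝⁿ → ℝᵐ and g : ℝⁿ → ℝᵖ be continuously differentiable, let λ ∈ ℝᵐ, μ ∈ ℝᵖ with μ ≥ 0, and ρ > 0. Then for every x ∈ ℝⁿ, ‖ (1/2)∇[‖h(x) + λ/ρ‖² + ‖(g(x) + μ/ρ)_+‖²] − (1/2)∇[‖h(x)‖² + ‖g(x)_+‖²] ‖ ≤ (1/ρ)[ ‖∇h(x)‖·‖λ‖ + ‖∇g(x)‖·‖μ‖ ], where the gradients are with respect to x, ∇h(x) and ∇g(x) are the matrices with columns ∇h_i(x) and ∇g_i(x), and ‖·‖ denotes the Euclidean norm of vectors and the operator norm of matrices. -/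
open scoped BigOperators

-- L1: derivative of positive part squared
lemma hasDerivAt_posSq (a : ℝ) : HasDerivAt (fun t : ℝ => max t 0 ^ 2) (2 * max a 0) a := by
  rcases lt_trichotomy a 0 with ha | ha | ha
  · have : (fun t : ℝ => max t 0 ^ 2) =ᶠ[nhds a] fun _ => (0:ℝ) := by
      filter_upwards [eventually_lt_nhds ha] with t ht
      simp [max_eq_right ht.le]
    rw [max_eq_right ha.le, mul_zero]
    exact (hasDerivAt_const a (0:ℝ)).congr_of_eventuallyEq this
  · subst ha
    rw [hasDerivAt_iff_isLittleO]
    simp only [max_self, mul_zero, zero_pow, smul_zero, sub_zero]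
    have h1 : (fun t : ℝ => max t 0 ^ 2) =O[nhds 0] fun t => t ^ 2 := by
      apply Asymptotics.IsBigO.of_bound 1
      filter_upwards with t
      simp only [one_mul, Real.norm_eq_abs, abs_pow, sq_abs]
      rcases le_or_gt t 0 with ht | ht
      · simp [max_eq_right ht, sq_nonneg]
      · simp [max_eq_left ht.le]
    have h2 : (fun t : ℝ => t ^ 2) =o[nhds 0] fun t => t - 0 := by
      rw [Asymptotics.isLittleO_iff]
      intro ε hε
      filter_upwards [Metric.ball_mem_nhds (0:ℝ) hε] with t ht
      simp only [Metric.mem_ball, Real.dist_eq, sub_zero] at ht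
      simp only [Real.norm_eq_abs, sub_zero, abs_pow, sq]
      rw [abs_mul]
      exact mul_le_mul_of_nonneg_right ht.le (abs_nonneg _)
    simpa using h1.trans_isLittleO h2
  · have : (fun t : ℝ => max t 0 ^ 2) =ᶠ[nhds a] fun t => t ^ 2 := by
      filter_upwards [eventually_gt_nhds ha] with t ht
      simp [max_eq_left ht.le]
    rw [max_eq_left ha.le]
    exact ((hasDerivAt_pow 2 a).congr_of_eventuallyEq this).congr_deriv (by ring)

-- L2: gradient of a sum of scalar compositions with components
lemma hasGradientAt_sum_comp_s11 {n k : ℕ}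
    (f : EuclideanSpace ℝ (Fin n) → EuclideanSpace ℝ (Fin k))
    (x : EuclideanSpace ℝ (Fin n)) (hf : DifferentiableAt ℝ f x)
    (φ : Fin k → ℝ → ℝ) (d : Fin k → ℝ)
    (hφ : ∀ i, HasDerivAt (φ i) (d i) (f x i)) :
    HasGradientAt (fun y => ∑ i, φ i (f y i))
      (∑ i, d i • gradient (fun y => f y i) x) x := by
  rw [hasGradientAt_iff_hasFDerivAt]
  have hcomp : ∀ i : Fin k, HasFDerivAt (fun y => φ i (f y i))
      (d i • InnerProductSpace.toDual ℝ _ (gradient (fun y => f y i) x)) x := by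
    intro i
    have hfi : DifferentiableAt ℝ (fun y => f y i) x := by
      have := ((EuclideanSpace.proj (𝕜 := ℝ) i).differentiableAt).comp x hf
      exact this
    have hgi : HasFDerivAt (fun y => f y i)
        (InnerProductSpace.toDual ℝ _ (gradient (fun y => f y i) x)) x :=
      hasGradientAt_iff_hasFDerivAt.mp hfi.hasGradientAt
    exact (hφ i).comp_hasFDerivAt x hgi
  have := HasFDerivAt.fun_sum (fun i (_ : i ∈ Finset.univ) => hcomp i)
  convert this using 1
  · rfl
  · rfl
  · simp [map_sum]

-- helper: add for gradients
lemma HasGradientAt.add' {F : Type*} [NormedAddCommGroup F] [InnerProductSpace ℝ F]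
    [CompleteSpace F] {f₁ f₂ : F → ℝ} {g₁ g₂ x : F}
    (h₁ : HasGradientAt f₁ g₁ x) (h₂ : HasGradientAt f₂ g₂ x) :
    HasGradientAt (fun y => f₁ y + f₂ y) (g₁ + g₂) x := by
  rw [hasGradientAt_iff_hasFDerivAt] at *
  rw [map_add]; exact h₁.fun_add h₂

lemma sum_apply_euclidean {n k : ℕ} (w : Fin k → EuclideanSpace ℝ (Fin n)) (i : Fin n) :
    (∑ j, w j) i = ∑ j, w j i := by
  induction (Finset.univ : Finset (Fin k)) using Finset.induction with
  | empty => rfl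
  | insert _ _ hx ih => rw [Finset.sum_insert hx, Finset.sum_insert hx, ← ih]; rfl

lemma jacobianT_apply {n m : ℕ}
    (h : EuclideanSpace ℝ (Fin n) → EuclideanSpace ℝ (Fin m))
    (x : EuclideanSpace ℝ (Fin n)) (v : EuclideanSpace ℝ (Fin m)) :
    jacobianT h x v = ∑ j, v j • gradient (fun y => h y j) x := by
  unfold jacobianT
  ext i
  simp [Matrix.toEuclideanLin_apply, Matrix.mulVec, dotProduct,
    PiLp.smul_apply, smul_eq_mul, mul_comm]

lemma norm_le_of_abs_le {k : ℕ} (a b : EuclideanSpace ℝ (Fin k))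
    (hab : ∀ i, |a i| ≤ |b i|) : ‖a‖ ≤ ‖b‖ := by
  rw [EuclideanSpace.norm_eq, EuclideanSpace.norm_eq]
  apply Real.sqrt_le_sqrt
  apply Finset.sum_le_sum
  intro i _
  simp only [Real.norm_eq_abs]
  exact pow_le_pow_left₀ (abs_nonneg _) (hab i) 2
/-- The half-gradients of the shifted and unshifted squared infeasibility measures differ
by at most `(1/ρ) (‖∇h(x)‖‖λ‖ + ‖∇g(x)‖‖μ‖)`. -/
theorem gradient_shifted_infeasibility_difference_bound
    {n m p : ℕ}
    (h : EuclideanSpace ℝ (Fin n) → EuclideanSpace ℝ (Fin m))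
    (g : EuclideanSpace ℝ (Fin n) → EuclideanSpace ℝ (Fin p))
    (hh : ContDiff ℝ 1 h) (hg : ContDiff ℝ 1 g)
    (lam : EuclideanSpace ℝ (Fin m)) (mu : EuclideanSpace ℝ (Fin p))
    (hmu : ∀ j, 0 ≤ mu j) (ρ : ℝ) (hρ : 0 < ρ) :
    ∀ x : EuclideanSpace ℝ (Fin n),
      ‖(1 / 2 : ℝ) • gradient (shiftedInfeas h g lam mu ρ) x
          - (1 / 2 : ℝ) • gradient (infeas h g) x‖ ≤
        (1 / ρ) * (‖jacobianT h x‖ * ‖lam‖ + ‖jacobianT g x‖ * ‖mu‖) := by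
  intro x
  have hhd : DifferentiableAt ℝ h x := hh.differentiable one_ne_zero x
  have hgd : DifferentiableAt ℝ g x := hg.differentiable one_ne_zero x
  -- gradients of the four pieces
  have H1 : HasGradientAt (fun y => ∑ i, (h y i + lam i / ρ) ^ 2)
      (∑ i, (2 * (h x i + lam i / ρ)) • gradient (fun y => h y i) x) x := by
    refine hasGradientAt_sum_comp_s11 h x hhd (fun i t => (t + lam i / ρ) ^ 2) _ (fun i => ?_)
    have := ((hasDerivAt_id (h x i)).add_const (lam i / ρ)).fun_pow 2
    simpa [mul_comm] using this
  have H2 : HasGradientAt (fun y => ∑ j, max (g y j + mu j / ρ) 0 ^ 2)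
      (∑ j, (2 * max (g x j + mu j / ρ) 0) • gradient (fun y => g y j) x) x := by
    refine hasGradientAt_sum_comp_s11 g x hgd (fun j t => max (t + mu j / ρ) 0 ^ 2) _ (fun j => ?_)
    have := (hasDerivAt_posSq (g x j + mu j / ρ)).comp (g x j)
      ((hasDerivAt_id (g x j)).add_const (mu j / ρ))
    exact this.congr_deriv (by ring)
  have H3 : HasGradientAt (fun y => ∑ i, h y i ^ 2)
      (∑ i, (2 * h x i) • gradient (fun y => h y i) x) x := by
    refine hasGradientAt_sum_comp_s11 h x hhd (fun i t => t ^ 2) _ (fun i => ?_)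
    simpa [mul_comm] using (hasDerivAt_id (h x i)).fun_pow 2
  have H4 : HasGradientAt (fun y => ∑ j, max (g y j) 0 ^ 2)
      (∑ j, (2 * max (g x j) 0) • gradient (fun y => g y j) x) x := by
    refine hasGradientAt_sum_comp_s11 g x hgd (fun j t => max t 0 ^ 2) _ (fun j => ?_)
    exact hasDerivAt_posSq (g x j)
  have GS : gradient (shiftedInfeas h g lam mu ρ) x =
      (∑ i, (2 * (h x i + lam i / ρ)) • gradient (fun y => h y i) x) +
      ∑ j, (2 * max (g x j + mu j / ρ) 0) • gradient (fun y => g y j) x :=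
    (H1.add' H2).gradient
  have GI : gradient (infeas h g) x =
      (∑ i, (2 * h x i) • gradient (fun y => h y i) x) +
      ∑ j, (2 * max (g x j) 0) • gradient (fun y => g y j) x :=
    (H3.add' H4).gradient
  set u : EuclideanSpace ℝ (Fin m) := ρ⁻¹ • lam with hu
  set w : EuclideanSpace ℝ (Fin p) :=
    (WithLp.equiv 2 (Fin p → ℝ)).symm
      (fun j => max (g x j + mu j / ρ) 0 - max (g x j) 0) with hw
  have hwj : ∀ j, w j = max (g x j + mu j / ρ) 0 - max (g x j) 0 := fun j => rfl
  have key : (1 / 2 : ℝ) • gradient (shiftedInfeas h g lam mu ρ) x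
      - (1 / 2 : ℝ) • gradient (infeas h g) x
      = jacobianT h x u + jacobianT g x w := by
    rw [GS, GI, jacobianT_apply, jacobianT_apply]
    rw [smul_add, smul_add, add_sub_add_comm, Finset.smul_sum, Finset.smul_sum,
      Finset.smul_sum, Finset.smul_sum, ← Finset.sum_sub_distrib, ← Finset.sum_sub_distrib]
    congr 1
    · refine Finset.sum_congr rfl fun i _ => ?_
      rw [smul_smul, smul_smul, ← sub_smul]
      congr 1
      have : u i = ρ⁻¹ * lam i := rfl
      rw [this]; field_simp; ring
    · refine Finset.sum_congr rfl fun j _ => ?_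
      rw [smul_smul, smul_smul, ← sub_smul, hwj j]
      congr 1
      ring
  rw [key]
  have hnu : ‖u‖ = ρ⁻¹ * ‖lam‖ := by
    rw [hu, norm_smul, Real.norm_eq_abs, abs_of_pos (inv_pos.mpr hρ)]
  have hnw : ‖w‖ ≤ ρ⁻¹ * ‖mu‖ := by
    have : ‖w‖ ≤ ‖(ρ⁻¹ • mu : EuclideanSpace ℝ (Fin p))‖ := by
      refine norm_le_of_abs_le _ _ fun j => ?_
      rw [hwj j]
      have h1 : |max (g x j + mu j / ρ) 0 - max (g x j) 0| ≤ |mu j / ρ| := by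
        have := abs_max_sub_max_le_abs (g x j + mu j / ρ) (g x j) 0
        simpa using this
      have h2 : ((ρ⁻¹ • mu : EuclideanSpace ℝ (Fin p)) j) = ρ⁻¹ * mu j := rfl
      rw [h2]
      calc |max (g x j + mu j / ρ) 0 - max (g x j) 0| ≤ |mu j / ρ| := h1
        _ = |ρ⁻¹ * mu j| := by rw [div_eq_inv_mul]
    calc ‖w‖ ≤ ‖(ρ⁻¹ • mu : EuclideanSpace ℝ (Fin p))‖ := this
      _ = ρ⁻¹ * ‖mu‖ := by
        rw [norm_smul, Real.norm_eq_abs, abs_of_pos (inv_pos.mpr hρ)]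
  calc ‖jacobianT h x u + jacobianT g x w‖
      ≤ ‖jacobianT h x u‖ + ‖jacobianT g x w‖ := norm_add_le _ _
    _ ≤ ‖jacobianT h x‖ * ‖u‖ + ‖jacobianT g x‖ * ‖w‖ := by
        exact add_le_add ((jacobianT h x).le_opNorm u) ((jacobianT g x).le_opNorm w)
    _ ≤ ‖jacobianT h x‖ * (ρ⁻¹ * ‖lam‖) + ‖jacobianT g x‖ * (ρ⁻¹ * ‖mu‖) := by
        exact add_le_add (mul_le_mul_of_nonneg_left hnu.le (norm_nonneg _))
          (mul_le_mul_of_nonneg_left hnw (norm_nonneg _))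
    _ = (1 / ρ) * (‖jacobianT h x‖ * ‖lam‖ + ‖jacobianT g x‖ * ‖mu‖) := by
        field_simp
end

section
/- Let C ⊆ ℝⁿ be a nonempty closed convex set, P_C the Euclidean projection onto C, x ∈ C, v ∈ ℝⁿ, and 0 < s ≤ 1. Then ‖P_C(x − s v) − x‖ ≤ ‖P_C(x − v) − x‖, where ‖·‖ is the Euclidean norm. That is, for a point of C the norm of the projected step is nondecreasing in the step size; in particular, if ‖P_C(x − v) − x‖ ≤ ε then ‖P_C(x − (1/ρ) v) − x‖ ≤ ε for every ρ ≥ 1. -/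
open RealInnerProductSpace

private lemma proj_vi {n : ℕ} {C : Set (EuclideanSpace ℝ (Fin n))}
    (hCcv : Convex ℝ C)
    {P : EuclideanSpace ℝ (Fin n) → EuclideanSpace ℝ (Fin n)}
    (hP : ∀ y, P y ∈ C ∧ ∀ z ∈ C, ‖y - P y‖ ≤ ‖y - z‖)
    (y : EuclideanSpace ℝ (Fin n)) :
    ∀ z ∈ C, ⟪y - P y, z - P y⟫ ≤ 0 := by
  have hne : C.Nonempty := ⟨P y, (hP y).1⟩
  haveI := hne.to_subtype
  have hmin : ‖y - P y‖ = ⨅ w : C, ‖y - w‖ := by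
    refine le_antisymm (le_ciInf fun w => (hP y).2 w w.2) ?_
    exact ciInf_le ⟨0, fun r hr => by obtain ⟨w, rfl⟩ := hr; positivity⟩
      (⟨P y, (hP y).1⟩ : C)
  exact ((norm_eq_iInf_iff_real_inner_le_zero hCcv (hP y).1).1 hmin)

set_option maxHeartbeats 1000000 in
private lemma proj_step_mono {n : ℕ} {C : Set (EuclideanSpace ℝ (Fin n))}
    (hCcv : Convex ℝ C)
    {P : EuclideanSpace ℝ (Fin n) → EuclideanSpace ℝ (Fin n)}
    (hP : ∀ y, P y ∈ C ∧ ∀ z ∈ C, ‖y - P y‖ ≤ ‖y - z‖)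
    {x : EuclideanSpace ℝ (Fin n)} (hx : x ∈ C)
    (v : EuclideanSpace ℝ (Fin n)) {s : ℝ} (hs0 : 0 < s) (hs1 : s ≤ 1) :
    ‖P (x - s • v) - x‖ ≤ ‖P (x - v) - x‖ := by
  set a := P (x - v) - x with ha
  set b := P (x - s • v) - x with hb
  -- VI at P (x - v) with z = P (x - s • v)
  have h1 : ⟪(x - v) - P (x - v), P (x - s • v) - P (x - v)⟫ ≤ 0 :=
    proj_vi hCcv hP (x - v) _ (hP (x - s • v)).1
  -- VI at P (x - s • v) with z = P (x - v)
  have h2 : ⟪(x - s • v) - P (x - s • v), P (x - v) - P (x - s • v)⟫ ≤ 0 :=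
    proj_vi hCcv hP (x - s • v) _ (hP (x - v)).1
  have e1 : (x - v) - P (x - v) = -(v + a) := by simp only [ha]; abel
  have e2 : P (x - s • v) - P (x - v) = b - a := by simp only [ha, hb]; abel
  have e3 : (x - s • v) - P (x - s • v) = -(s • v + b) := by simp only [hb]; abel
  have e4 : P (x - v) - P (x - s • v) = a - b := by simp only [ha, hb]; abel
  rw [e1, e2] at h1
  rw [e3, e4] at h2
  have h1' : 0 ≤ ⟪v + a, b - a⟫ := by
    rw [inner_neg_left] at h1; linarith
  have h2' : 0 ≤ ⟪s • v + b, a - b⟫ := by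
    rw [inner_neg_left] at h2; linarith
  have h1e : 0 ≤ ⟪v, b - a⟫ + ⟪a, b - a⟫ := by
    rw [inner_add_left] at h1'; linarith
  have h2e : 0 ≤ s * ⟪v, a - b⟫ + ⟪b, a - b⟫ := by
    rw [inner_add_left, real_inner_smul_left] at h2'; linarith
  have hab : ⟪v, a - b⟫ = -⟪v, b - a⟫ := by
    rw [← inner_neg_right]; congr 1; abel
  have hcomb : 0 ≤ s * ⟪a, b - a⟫ + ⟪b, a - b⟫ := by
    rw [hab] at h2e; nlinarith
  -- rewrite inner products in terms of norms
  have hba : ⟪b, a - b⟫ = ⟪a, b⟫ - ‖b‖^2 := by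
    rw [inner_sub_right, real_inner_self_eq_norm_sq, real_inner_comm]
  have haa : ⟪a, b - a⟫ = ⟪a, b⟫ - ‖a‖^2 := by
    rw [inner_sub_right, real_inner_self_eq_norm_sq]
  rw [hba, haa] at hcomb
  have hcs : ⟪a, b⟫ ≤ ‖a‖ * ‖b‖ := real_inner_le_norm a b
  by_contra hlt
  push_neg at hlt
  have hsa : s * ‖a‖ ≤ ‖a‖ := by nlinarith [norm_nonneg a]
  have h5 : 0 < (‖b‖ - ‖a‖) * (‖b‖ - s * ‖a‖) :=
    mul_pos (by linarith) (by linarith)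
  nlinarith [h5, hcs, mul_le_mul_of_nonneg_left hcs (show (0:ℝ) ≤ 1 + s by linarith)]

/-- For the Euclidean projection `P_C` onto a nonempty closed convex set `C ⊆ ℝⁿ` and a
point `x ∈ C`, the norm of the projected step `‖P_C(x − s v) − x‖` is nondecreasing in the
step size `s ∈ (0,1]`; in particular, if `‖P_C(x − v) − x‖ ≤ ε`, then
`‖P_C(x − (1/ρ) v) − x‖ ≤ ε` for every `ρ ≥ 1`. -/
theorem projected_step_norm_monotone
    {n : ℕ} (C : Set (EuclideanSpace ℝ (Fin n)))
    (hCne : C.Nonempty) (hCcl : IsClosed C) (hCcv : Convex ℝ C)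
    (P : EuclideanSpace ℝ (Fin n) → EuclideanSpace ℝ (Fin n))
    (hP : ∀ y, P y ∈ C ∧ ∀ z ∈ C, ‖y - P y‖ ≤ ‖y - z‖)
    (x : EuclideanSpace ℝ (Fin n)) (hx : x ∈ C)
    (v : EuclideanSpace ℝ (Fin n)) (s : ℝ) (hs0 : 0 < s) (hs1 : s ≤ 1) :
    ‖P (x - s • v) - x‖ ≤ ‖P (x - v) - x‖ ∧
      ∀ ε ρ : ℝ, 1 ≤ ρ → ‖P (x - v) - x‖ ≤ ε → ‖P (x - (1 / ρ) • v) - x‖ ≤ ε := by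
  refine ⟨proj_step_mono hCcv hP hx v hs0 hs1, fun ε ρ hρ hε => ?_⟩
  have hρ0 : (0:ℝ) < ρ := lt_of_lt_of_le one_pos hρ
  exact le_trans (proj_step_mono hCcv hP hx v (by positivity) (by
    rw [div_le_one hρ0]; exact hρ)) hε
end
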